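/- (Cancellation lemma, Euler case) For every natural number n and every real number x, (1/2) ∫_{-∞}^{∞} [ (x - 1/2 + i u)^n + (x + 1/2 + i u)^n ] · sech(π u) du = xⁿ; that is, adding an independent Rademacher shift (taking values 0 and 1 each with probability 1/2) to x - 1/2 + i·(hyperbolic secant variable) reduces every integer moment to xⁿ. -/

import Mathlib

open MeasureTheory Real

open Complex Filter

lemma cosh_decomp (a b : ℝ) :
    Complex.cosh ((a:ℂ) + (b:ℂ)*Complex.I)
      = ((Real.cosh a * Real.cos b : ℝ) : ℂ) + ((Real.sinh a * Real.sin b : ℝ) : ℂ)*Complex.I := by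
  rw [Complex.cosh_add, Complex.cosh_mul_I, Complex.sinh_mul_I]
  push_cast [← Complex.ofReal_cosh, ← Complex.ofReal_sinh, ← Complex.ofReal_cos,
    ← Complex.ofReal_sin]
  ring

lemma abs_cosh_ge (a b : ℝ) :
    |Real.sinh a| ≤ ‖Complex.cosh ((a:ℂ) + (b:ℂ)*Complex.I)‖ := by
  rw [cosh_decomp, Complex.norm_def, Complex.normSq_add_mul_I]
  rw [← Real.sqrt_sq_eq_abs]
  apply Real.sqrt_le_sqrt
  nlinarith [Real.sin_sq_add_cos_sq b, Real.cosh_sq a, sq_nonneg (Real.sinh a * Real.sin b),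
    sq_nonneg (Real.cos b), sq_nonneg (Real.sinh a)]

lemma cosh_ne_zero_of (a b : ℝ) (h : Real.sinh a ≠ 0 ∨ Real.cos b ≠ 0) :
    Complex.cosh ((a:ℂ) + (b:ℂ)*Complex.I) ≠ 0 := by
  rw [cosh_decomp]
  intro hz
  rw [Complex.ext_iff] at hz
  simp only [Complex.add_re, Complex.add_im, Complex.ofReal_re, Complex.ofReal_im,
    Complex.mul_re, Complex.mul_im, Complex.I_re, Complex.I_im, Complex.zero_re,
    Complex.zero_im] at hz
  have h1 : Real.cosh a * Real.cos b = 0 := by linarith [hz.1]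
  have h2 : Real.sinh a * Real.sin b = 0 := by linarith [hz.2]
  have hca := Real.cosh_pos a
  rcases h with h | h
  · have hsb : Real.sin b = 0 := by
      rcases mul_eq_zero.1 h2 with h' | h'; exact absurd h' h; exact h'
    have hcb : Real.cos b = 0 := by
      rcases mul_eq_zero.1 h1 with h' | h'; exact absurd h' hca.ne'; exact h'
    nlinarith [Real.sin_sq_add_cos_sq b]
  · rcases mul_eq_zero.1 h1 with h' | h'
    · exact absurd h' hca.ne'
    · exact h h'

lemma cosh_pi_eq (z : ℂ) :
    Complex.cosh ((π:ℂ)*z) = Complex.I * Complex.sinh ((π:ℂ)*(z - Complex.I/2)) := by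
  have h : (π:ℂ)*(z - Complex.I/2) = (π:ℂ)*z - ((π/2 : ℝ):ℂ)*Complex.I := by
    push_cast; ring
  rw [h, Complex.sinh_sub, Complex.cosh_mul_I, Complex.sinh_mul_I,
    ← Complex.ofReal_cos, ← Complex.ofReal_sin, Real.cos_pi_div_two, Real.sin_pi_div_two]
  rw [Complex.ofReal_zero, Complex.ofReal_one]
  ring_nf
  rw [Complex.I_sq]
  ring

noncomputable def psi (w : ℂ) : ℂ := if w = 0 then ((π:ℝ):ℂ)⁻¹ else w / Complex.sinh ((π:ℂ)*w)

lemma psi_eq {w : ℂ} (h : w ≠ 0) : psi w = w / Complex.sinh ((π:ℂ)*w) := if_neg h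

lemma continuousAt_psi_zero : ContinuousAt psi 0 := by
  rw [← continuousWithinAt_compl_self]
  have hd : HasDerivAt (fun w : ℂ => Complex.sinh ((π:ℂ)*w)) ((π:ℂ)) 0 := by
    have := (Complex.hasDerivAt_sinh ((π:ℂ)*0)).comp 0
      ((hasDerivAt_id (0:ℂ)).const_mul ((π:ℂ)))
    simp at this
    exact this
  have hs := hasDerivAt_iff_tendsto_slope.mp hd
  have hπ : ((π:ℝ):ℂ) ≠ 0 := by
    simpa using Real.pi_ne_zero
  have hinv : Tendsto (fun w : ℂ => (slope (fun w : ℂ => Complex.sinh ((π:ℂ)*w)) 0 w)⁻¹)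
      (nhdsWithin 0 {(0:ℂ)}ᶜ) (nhds (((π:ℝ):ℂ))⁻¹) := hs.inv₀ hπ
  have hψ0 : psi 0 = ((π:ℝ):ℂ)⁻¹ := if_pos rfl
  unfold ContinuousWithinAt
  rw [hψ0]
  refine hinv.congr' ?_
  filter_upwards [self_mem_nhdsWithin] with w hw
  have hw' : w ≠ 0 := hw
  rw [psi_eq hw', slope_def_field]
  simp only [Complex.sinh_zero, mul_zero, sub_zero]
  rw [inv_div]

lemma psi_hasDeriv_at_ne {w : ℂ} (hw : w ≠ 0) (hs : Complex.sinh ((π:ℂ)*w) ≠ 0) :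
    DifferentiableAt ℂ psi w := by
  have hev : (fun z => z / Complex.sinh ((π:ℂ)*z)) =ᶠ[nhds w] psi := by
    filter_upwards [isOpen_compl_singleton.mem_nhds (by simpa using hw)] with z hz
    exact (psi_eq hz).symm
  refine DifferentiableAt.congr_of_eventuallyEq ?_ hev.symm
  exact (differentiableAt_id.div ((Complex.differentiable_sinh _).comp w
    ((differentiable_id.const_mul _) w)) hs)

lemma tendsto_poly_exp (c b : ℝ) (hb : 0 < b) (n : ℕ) :
    Tendsto (fun R : ℝ => (c + R)^n * Real.exp (-(b*R))) atTop (nhds 0) := by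
  have h1 : Tendsto (fun t : ℝ => t^n * Real.exp (-t)) atTop (nhds 0) :=
    tendsto_pow_mul_exp_neg_atTop_nhds_zero n
  have h2 : Tendsto (fun R : ℝ => b*(c+R)) atTop atTop := by
    apply Tendsto.const_mul_atTop hb
    exact tendsto_atTop_add_const_left _ c tendsto_id
  have h4 : Tendsto (fun R : ℝ => (b*(c+R))^n * Real.exp (-(b*(c+R)))) atTop (nhds 0) :=
    h1.comp h2
  have h5 := h4.div_const (b^n)
  rw [zero_div] at h5
  have h6 := h5.mul_const (Real.exp (b*c))
  rw [zero_mul] at h6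
  refine h6.congr fun R => ?_
  have hE : Real.exp (-(b*(c+R))) * Real.exp (b*c) = Real.exp (-(b*R)) := by
    rw [← Real.exp_add]; ring_nf
  rw [mul_pow]
  field_simp
  linear_combination (norm := ring_nf) ((c+R)^n) * hE

lemma integrable_aux (c : ℝ) (n : ℕ) :
    Integrable (fun u : ℝ => (c + |u|)^n / Real.cosh (π*u)) := by
  set g : ℝ → ℝ := fun u => (c + |u|)^n / Real.cosh (π*u) with hg
  have hcont : Continuous g := by
    apply Continuous.div
    · exact (continuous_const.add _root_.continuous_abs).pow n
    · exact Real.continuous_cosh.comp (continuous_const.mul continuous_id)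
    · exact fun u => (Real.cosh_pos (π*u)).ne'
  have hO : g =O[atTop] fun u : ℝ => Real.exp (-u) := by
    apply Asymptotics.IsLittleO.isBigO
    apply Asymptotics.isLittleO_of_tendsto (fun u hu => absurd hu (Real.exp_ne_zero _))
    have hbound : ∀ᶠ u : ℝ in atTop, |g u / Real.exp (-u)| ≤ 2*(c+u)^n*Real.exp (-((π-1)*u)) := by
      filter_upwards [eventually_ge_atTop (max 0 (-c))] with u hu
      have hu0 : 0 ≤ u := le_trans (le_max_left _ _) hu
      have hcu : 0 ≤ c + u := by
        have := le_trans (le_max_right _ _) hu; linarith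
      have hcosh : Real.exp (π*u) / 2 ≤ Real.cosh (π*u) := by
        rw [Real.cosh_eq]
        have := (Real.exp_pos (-(π*u))).le
        linarith
      have hgnn : 0 ≤ g u / Real.exp (-u) := by
        apply div_nonneg _ (Real.exp_pos _).le
        apply div_nonneg _ (Real.cosh_pos _).le
        rw [_root_.abs_of_nonneg hu0]; positivity
      have habs : |g u / Real.exp (-u)| = (c+u)^n / Real.cosh (π*u) * Real.exp u := by
        rw [_root_.abs_of_nonneg hgnn, hg]
        simp only []
        rw [_root_.abs_of_nonneg hu0, Real.exp_neg, div_eq_mul_inv, inv_inv]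
      rw [habs]
      have hcu' : 0 ≤ (c+u)^n := by positivity
      have h2 : (c+u)^n / Real.cosh (π*u) ≤ (c+u)^n * (2 * Real.exp (-(π*u))) := by
        rw [div_le_iff₀ (Real.cosh_pos _)]
        have hE : Real.exp (-(π*u)) * Real.exp (π*u) = 1 := by
          rw [← Real.exp_add]; ring_nf; exact Real.exp_zero
        have hone : 2 * Real.exp (-(π*u)) * (Real.exp (π*u)/2) = 1 := by
          linear_combination hE
        calc (c+u)^n = (c+u)^n * (2 * Real.exp (-(π*u)) * (Real.exp (π*u)/2)) := by
              rw [hone, mul_one]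
          _ ≤ (c+u)^n * (2 * Real.exp (-(π*u)) * Real.cosh (π*u)) := by
              apply mul_le_mul_of_nonneg_left _ hcu'
              apply mul_le_mul_of_nonneg_left hcosh
              positivity
          _ = (c+u)^n * (2 * Real.exp (-(π*u))) * Real.cosh (π*u) := by ring
      have hE2 : Real.exp (-(π*u)) * Real.exp u = Real.exp (-((π-1)*u)) := by
        rw [← Real.exp_add]; ring_nf
      calc (c+u)^n / Real.cosh (π*u) * Real.exp u
          ≤ (c+u)^n * (2*Real.exp (-(π*u))) * Real.exp u := by
            apply mul_le_mul_of_nonneg_right h2 (Real.exp_pos _).le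
        _ = 2*(c+u)^n*Real.exp (-((π-1)*u)) := by linear_combination (2*(c+u)^n) * hE2
    have hlim : Tendsto (fun u : ℝ => 2*(c+u)^n*Real.exp (-((π-1)*u))) atTop (nhds 0) := by
      have := (tendsto_poly_exp c (π-1) (by linarith [Real.pi_gt_three]) n).const_mul 2
      rw [mul_zero] at this
      exact this.congr fun u => by ring
    exact squeeze_zero_norm' (hbound.mono fun u h => by rwa [Real.norm_eq_abs]) hlim
  have hsymm : norm ∘ g =ᵐ[volume] norm ∘ g ∘ Neg.neg := by
    refine Filter.Eventually.of_forall fun u => ?_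
    simp only [Function.comp_apply, hg, abs_neg, mul_neg, Real.cosh_neg]
  exact (hcont.locallyIntegrable).integrable_of_isBigO_atTop_of_norm_isNegInvariant hsymm hO
    ⟨Set.Ioi 0, Ioi_mem_atTop 0, by simpa using exp_neg_integrableOn_Ioi 0 one_pos⟩

lemma tendsto_sinh_atTop : Tendsto Real.sinh atTop atTop := by
  have h1 : Tendsto (fun u : ℝ => Real.exp u / 2) atTop atTop :=
    Real.tendsto_exp_atTop.atTop_div_const two_pos
  have h2 : Tendsto (fun u : ℝ => -Real.exp (-u) / 2) atTop (nhds 0) := by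
    have h : Tendsto (fun u : ℝ => Real.exp (-u)) atTop (nhds 0) :=
      Real.tendsto_exp_atBot.comp tendsto_neg_atTop_atBot
    simpa using h.neg.div_const 2
  refine (h1.atTop_add h2).congr fun u => ?_
  rw [Real.sinh_eq]; ring

lemma tendsto_sinh_atBot : Tendsto Real.sinh atBot atBot := by
  have h : Tendsto (fun u : ℝ => Real.sinh (-u)) atBot atTop :=
    tendsto_sinh_atTop.comp tendsto_neg_atBot_atTop
  have h2 : Tendsto (fun u : ℝ => -Real.sinh (-u)) atBot atBot :=
    tendsto_neg_atTop_atBot.comp h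
  refine h2.congr fun u => ?_
  rw [Real.sinh_neg, neg_neg]

lemma integral_sech : ∫ u : ℝ, 1 / Real.cosh (π*u) = 1 := by
  have hderiv : ∀ u : ℝ, HasDerivAt (fun u : ℝ => (1/π) * Real.arctan (Real.sinh (π*u)))
      (1 / Real.cosh (π*u)) u := by
    intro u
    have h1 : HasDerivAt (fun u : ℝ => π*u) π u := by
      simpa using (hasDerivAt_id u).const_mul π
    have h2 := (Real.hasDerivAt_sinh (π*u)).comp u h1
    have h3 := (Real.hasDerivAt_arctan (Real.sinh (π*u))).comp u h2
    have h4 := h3.const_mul (1/π)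
    refine h4.congr_deriv ?_
    have hc := Real.cosh_pos (π*u)
    have hsq : 1 + Real.sinh (π*u)^2 = Real.cosh (π*u)^2 := by
      have := Real.cosh_sq (π*u); linarith
    rw [hsq]
    field_simp
  have hint : Integrable (fun u : ℝ => 1 / Real.cosh (π*u)) := by
    have := integrable_aux 0 0
    simpa using this
  have hpi : Tendsto (fun u : ℝ => π*u) atTop atTop := tendsto_id.const_mul_atTop Real.pi_pos
  have hpib : Tendsto (fun u : ℝ => π*u) atBot atBot := by
    have := tendsto_neg_atTop_atBot.comp (hpi.comp tendsto_neg_atBot_atTop)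
    refine this.congr fun u => ?_
    simp
  have htop : Tendsto (fun u : ℝ => (1/π) * Real.arctan (Real.sinh (π*u))) atTop
      (nhds ((1/π) * (π/2))) := by
    apply Tendsto.const_mul
    exact (tendsto_nhds_of_tendsto_nhdsWithin Real.tendsto_arctan_atTop).comp
      (tendsto_sinh_atTop.comp hpi)
  have hbot : Tendsto (fun u : ℝ => (1/π) * Real.arctan (Real.sinh (π*u))) atBot
      (nhds ((1/π) * (-(π/2)))) := by
    apply Tendsto.const_mul
    exact (tendsto_nhds_of_tendsto_nhdsWithin Real.tendsto_arctan_atBot).comp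
      (tendsto_sinh_atBot.comp hpib)
  have := MeasureTheory.integral_of_hasDerivAt_of_tendsto hderiv hint hbot htop
  rw [this]
  field_simp
  norm_num

noncomputable def pp (n : ℕ) (x : ℝ) (z : ℂ) : ℂ :=
  ∑ i ∈ Finset.range n, ((x:ℂ) + 1/2 + Complex.I*z)^i * (x:ℂ)^(n-1-i)

lemma pp_continuous (n : ℕ) (x : ℝ) : Continuous (pp n x) := by
  apply continuous_finset_sum
  intro i _
  exact ((continuous_const.add (continuous_const.mul continuous_id)).pow i).mul continuous_const

lemma pp_differentiable (n : ℕ) (x : ℝ) : Differentiable ℂ (pp n x) := by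
  apply Differentiable.fun_sum
  intro i _
  exact ((differentiable_const _ |>.add ((differentiable_const _).mul differentiable_id)).pow i).mul
    (differentiable_const _)

lemma decomp_pi_mul (z : ℂ) :
    (π:ℂ)*z = ((π*z.re : ℝ):ℂ) + ((π*z.im : ℝ):ℂ)*Complex.I := by
  conv_lhs => rw [← Complex.re_add_im z]
  push_cast
  ring

lemma cosh_pi_ne_zero_of_re (z : ℂ) (h : z.re ≠ 0) : Complex.cosh ((π:ℂ)*z) ≠ 0 := by
  rw [decomp_pi_mul z]
  apply cosh_ne_zero_of
  left
  rw [Real.sinh_ne_zero]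
  exact mul_ne_zero Real.pi_ne_zero h

lemma cosh_pi_ne_zero_of_im (z : ℂ) (h0 : 0 ≤ z.im) (h1 : z.im ≤ 1) (hz : z ≠ Complex.I/2) :
    Complex.cosh ((π:ℂ)*z) ≠ 0 := by
  rcases eq_or_ne z.re 0 with hre | hre
  · rw [decomp_pi_mul z]
    apply cosh_ne_zero_of
    right
    intro hcos
    rw [Real.cos_eq_zero_iff] at hcos
    obtain ⟨k, hk⟩ := hcos
    have hπ := Real.pi_pos
    have him : z.im = (2*(k:ℝ)+1)/2 := by
      have : π * z.im = (2*(k:ℝ)+1) * π / 2 := hk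
      field_simp at this ⊢
      nlinarith [this]
    have hk0 : k = 0 := by
      rcases lt_trichotomy k 0 with h | h | h
      · exfalso
        have : (k:ℝ) ≤ -1 := by exact_mod_cast Int.le_sub_one_iff.mpr h
        rw [him] at h0; linarith
      · exact h
      · exfalso
        have : (1:ℝ) ≤ (k:ℝ) := by exact_mod_cast h
        rw [him] at h1; linarith
    apply hz
    rw [hk0] at him
    norm_num at him
    apply Complex.ext
    · simp [hre]
    · simp [him]
  · exact cosh_pi_ne_zero_of_re z hre

lemma sinh_shift (z : ℂ) : Complex.sinh ((π:ℂ)*(z - Complex.I/2)) = -Complex.I * Complex.cosh ((π:ℂ)*z) := by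
  rw [cosh_pi_eq z]
  linear_combination (Complex.sinh ((π:ℂ)*(z - Complex.I/2))) * Complex.I_sq

lemma G_eq (n : ℕ) (x : ℝ) (z : ℂ) (hz : Complex.cosh ((π:ℂ)*z) ≠ 0) :
    pp n x z * psi (z - Complex.I/2)
      = (((x:ℂ) + 1/2 + Complex.I*z)^n - (x:ℂ)^n) / Complex.cosh ((π:ℂ)*z) := by
  have hzne : z ≠ Complex.I/2 := by
    rintro rfl
    apply hz
    have : (π:ℂ)*(Complex.I/2) = ((π/2 : ℝ):ℂ)*Complex.I := by push_cast; ring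
    rw [this, Complex.cosh_mul_I, ← Complex.ofReal_cos, Real.cos_pi_div_two, Complex.ofReal_zero]
  have hw : z - Complex.I/2 ≠ 0 := sub_ne_zero.mpr hzne
  have hsinh : Complex.sinh ((π:ℂ)*(z - Complex.I/2)) ≠ 0 := by
    rw [sinh_shift]
    exact mul_ne_zero (neg_ne_zero.mpr Complex.I_ne_zero) hz
  have hgeom := geom_sum₂_mul ((x:ℂ) + 1/2 + Complex.I*z) ((x:ℂ)) n
  have hfac : ((x:ℂ) + 1/2 + Complex.I*z) - (x:ℂ) = Complex.I*(z - Complex.I/2) := by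
    linear_combination (1/2 : ℂ) * Complex.I_sq
  have hkey : (((x:ℂ)+1/2+Complex.I*z)^n - (x:ℂ)^n)
      = pp n x z * (Complex.I*(z - Complex.I/2)) := by
    rw [← hfac, pp, hgeom]
  rw [psi_eq hw, cosh_pi_eq z, hkey]
  rw [show pp n x z * (Complex.I*(z - Complex.I/2))
      = Complex.I * (pp n x z * (z - Complex.I/2)) by ring,
    mul_div_mul_left _ _ Complex.I_ne_zero, mul_div_assoc]

lemma integrable_mul_sech (F : ℝ → ℂ) (hF : Continuous F) (c C : ℝ) (n : ℕ)
    (hbound : ∀ u, ‖F u‖ ≤ C * (c+|u|)^n) :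
    Integrable (fun u => F u * ((1/Real.cosh (π*u) : ℝ):ℂ)) := by
  have hc : Continuous (fun u : ℝ => ((1/Real.cosh (π*u) : ℝ):ℂ)) := by
    apply Complex.continuous_ofReal.comp
    exact continuous_const.div (Real.continuous_cosh.comp (continuous_const.mul continuous_id))
      fun u => (Real.cosh_pos (π*u)).ne'
  apply Integrable.mono' ((integrable_aux c n).const_mul C)
  · exact (hF.mul hc).aestronglyMeasurable
  · refine Filter.Eventually.of_forall fun u => ?_
    rw [norm_mul, Complex.norm_real, Real.norm_eq_abs,
      _root_.abs_of_pos (by positivity : (0:ℝ) < 1/Real.cosh (π*u))]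
    calc ‖F u‖ * (1/Real.cosh (π*u)) ≤ C * (c+|u|)^n * (1/Real.cosh (π*u)) := by
          apply mul_le_mul_of_nonneg_right (hbound u) (by positivity)
      _ = C * ((c+|u|)^n / Real.cosh (π*u)) := by ring

lemma key_zero (n : ℕ) (x : ℝ) :
    ∫ u : ℝ, (((x:ℂ) - 1/2 + Complex.I*(u:ℂ))^n + ((x:ℂ) + 1/2 + Complex.I*(u:ℂ))^n
      - 2*(x:ℂ)^n) * ((1/Real.cosh (π*u) : ℝ):ℂ) = 0 := by
  set sechC : ℝ → ℂ := fun u => ((1/Real.cosh (π*u) : ℝ):ℂ) with hsechC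
  set Φ : ℝ → ℂ := fun u => (((x:ℂ) - 1/2 + Complex.I*(u:ℂ))^n
      + ((x:ℂ) + 1/2 + Complex.I*(u:ℂ))^n - 2*(x:ℂ)^n) * sechC u with hΦ
  set G : ℂ → ℂ := fun z => pp n x z * psi (z - Complex.I/2) with hG
  set M : ℝ → ℝ := fun R => ((|x|+3/2+R)^n + |x|^n)/Real.sinh (π*R) with hM
  -- continuity of sechC
  have hsc : Continuous sechC := by
    apply Complex.continuous_ofReal.comp
    exact continuous_const.div (Real.continuous_cosh.comp (continuous_const.mul continuous_id))
      fun u => (Real.cosh_pos (π*u)).ne'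
  -- integrability of Φ
  have hΦint : Integrable Φ := by
    apply integrable_mul_sech _ ?_ (|x|+3/2) 4 n
    · intro u
      have e1 : ‖((x:ℂ) - 1/2 + Complex.I*(u:ℂ))‖ ≤ |x|+3/2+|u| := by
        calc ‖((x:ℂ) - 1/2 + Complex.I*(u:ℂ))‖ ≤ ‖(x:ℂ) - 1/2‖ + ‖Complex.I*(u:ℂ)‖ :=
              norm_add_le _ _
          _ ≤ (‖(x:ℂ)‖ + ‖(1/2 : ℂ)‖) + ‖Complex.I‖*‖(u:ℂ)‖ := by
              rw [norm_mul]; exact add_le_add_left (norm_sub_le _ _) _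
          _ ≤ |x|+3/2+|u| := by
              simp [Complex.norm_real, Complex.norm_I]
              norm_num
      have e2 : ‖((x:ℂ) + 1/2 + Complex.I*(u:ℂ))‖ ≤ |x|+3/2+|u| := by
        calc ‖((x:ℂ) + 1/2 + Complex.I*(u:ℂ))‖ ≤ ‖(x:ℂ) + 1/2‖ + ‖Complex.I*(u:ℂ)‖ :=
              norm_add_le _ _
          _ ≤ (‖(x:ℂ)‖ + ‖(1/2 : ℂ)‖) + ‖Complex.I‖*‖(u:ℂ)‖ := by
              rw [norm_mul]; exact add_le_add_left (norm_add_le _ _) _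
          _ ≤ |x|+3/2+|u| := by
              simp [Complex.norm_real, Complex.norm_I]
              norm_num
      have e3 : ‖(x:ℂ)‖ ≤ |x|+3/2+|u| := by
        simp [Complex.norm_real]
        have := abs_nonneg u
        linarith
      have hb : (0:ℝ) ≤ |x|+3/2+|u| := by positivity
      calc ‖(((x:ℂ) - 1/2 + Complex.I*(u:ℂ))^n + ((x:ℂ) + 1/2 + Complex.I*(u:ℂ))^n
              - 2*(x:ℂ)^n)‖
          ≤ ‖((x:ℂ) - 1/2 + Complex.I*(u:ℂ))^n + ((x:ℂ) + 1/2 + Complex.I*(u:ℂ))^n‖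
              + ‖2*(x:ℂ)^n‖ := norm_sub_le _ _
        _ ≤ ‖((x:ℂ) - 1/2 + Complex.I*(u:ℂ))^n‖ + ‖((x:ℂ) + 1/2 + Complex.I*(u:ℂ))^n‖
              + ‖2*(x:ℂ)^n‖ := add_le_add_left (norm_add_le _ _) _
        _ ≤ (|x|+3/2+|u|)^n + (|x|+3/2+|u|)^n + 2*(|x|+3/2+|u|)^n := by
            gcongr
            · rw [norm_pow]; exact pow_le_pow_left₀ (norm_nonneg _) e1 n
            · rw [norm_pow]; exact pow_le_pow_left₀ (norm_nonneg _) e2 n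
            · rw [norm_mul, norm_pow]
              simp only [Complex.norm_ofNat]
              exact mul_le_mul_of_nonneg_left (pow_le_pow_left₀ (norm_nonneg _) e3 n) (by norm_num)
        _ = 4 * (|x|+3/2+|u|)^n := by ring
    · apply Continuous.sub
      apply Continuous.add
      · exact ((continuous_const.add (continuous_const.mul Complex.continuous_ofReal)).pow n)
      · exact ((continuous_const.add (continuous_const.mul Complex.continuous_ofReal)).pow n)
      · exact continuous_const
  -- boundary values
  have hcoshR : ∀ u : ℝ, Complex.cosh ((π:ℂ)*(u:ℂ)) = ((Real.cosh (π*u) : ℝ):ℂ) := by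
    intro u
    rw [show (π:ℂ)*(u:ℂ) = ((π*u : ℝ):ℂ) by push_cast; ring, Complex.ofReal_cosh]
  have hbot : ∀ u : ℝ, G ((u:ℂ)) = (((x:ℂ) + 1/2 + Complex.I*(u:ℂ))^n - (x:ℂ)^n) * sechC u := by
    intro u
    have hz : Complex.cosh ((π:ℂ)*(u:ℂ)) ≠ 0 := by
      rw [hcoshR u]
      exact_mod_cast (Real.cosh_pos (π*u)).ne'
    rw [hG]
    simp only []
    rw [G_eq n x _ hz, hcoshR u, hsechC]
    simp only []
    rw [div_eq_mul_inv]
    congr 1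
    push_cast
    rw [one_div]
  have htop : ∀ u : ℝ, G ((u:ℂ) + Complex.I)
      = -((((x:ℂ) - 1/2 + Complex.I*(u:ℂ))^n - (x:ℂ)^n) * sechC u) := by
    intro u
    have hcosh2 : Complex.cosh ((π:ℂ)*((u:ℂ) + Complex.I)) = -((Real.cosh (π*u) : ℝ):ℂ) := by
      rw [show (π:ℂ)*((u:ℂ) + Complex.I) = ((π*u : ℝ):ℂ) + ((π : ℝ):ℂ)*Complex.I
        by push_cast; ring]
      rw [cosh_decomp (π*u) π]
      simp [Real.cos_pi, Real.sin_pi]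
    have hz : Complex.cosh ((π:ℂ)*((u:ℂ) + Complex.I)) ≠ 0 := by
      rw [hcosh2]
      simp only [neg_ne_zero]
      exact_mod_cast (Real.cosh_pos (π*u)).ne'
    have harg : (x:ℂ) + 1/2 + Complex.I*((u:ℂ) + Complex.I) = (x:ℂ) - 1/2 + Complex.I*(u:ℂ) := by
      linear_combination Complex.I_sq
    rw [hG]
    simp only []
    rw [G_eq n x _ hz, hcosh2, harg, hsechC]
    simp only []
    rw [div_neg, div_eq_mul_inv]
    congr 2
    push_cast
    rw [one_div]
  -- the rectangle step
  have hrect : ∀ R : ℝ, 1 ≤ R → ‖∫ u in (-R)..R, Φ u‖ ≤ 2 * M R := by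
    intro R hR
    have hRpos : (0:ℝ) < R := lt_of_lt_of_le one_pos hR
    -- continuity of G on the strip
    have hGcont : ∀ z : ℂ, 0 ≤ z.im → z.im ≤ 1 → ContinuousAt G z := by
      intro z h0 h1
      have hsub : ContinuousAt (fun w : ℂ => w - Complex.I/2) z :=
        (continuous_sub_right (Complex.I/2)).continuousAt
      have h1 : ContinuousAt psi (z - Complex.I/2) := by
        rcases eq_or_ne z (Complex.I/2) with rfl | hz
        · rw [sub_self]; exact continuousAt_psi_zero
        · have hcosh : Complex.cosh ((π:ℂ)*z) ≠ 0 := cosh_pi_ne_zero_of_im z h0 h1 hz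
          have hw : z - Complex.I/2 ≠ 0 := sub_ne_zero.mpr hz
          have hs : Complex.sinh ((π:ℂ)*(z - Complex.I/2)) ≠ 0 := by
            rw [sinh_shift]
            exact mul_ne_zero (neg_ne_zero.mpr Complex.I_ne_zero) hcosh
          exact (psi_hasDeriv_at_ne hw hs).continuousAt
      exact ((pp_continuous n x).continuousAt).mul (ContinuousAt.comp (f := fun w : ℂ => w - Complex.I/2) (x := z) h1 hsub)
    have hmin : min (-R) R = -R := min_eq_left (by linarith)
    have hmax : max (-R) R = R := max_eq_right (by linarith)
    have hrect0 := Complex.integral_boundary_rect_eq_zero_of_differentiable_on_off_countable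
      G (((-R : ℝ)):ℂ) (((R:ℝ):ℂ) + Complex.I) {Complex.I/2} (Set.countable_singleton _)
      ?_ ?_
    rotate_left
    · -- continuity on closed rectangle
      intro z hz
      rw [Complex.mem_reProdIm] at hz
      have him := hz.2
      simp only [Complex.ofReal_re, Complex.add_im, Complex.ofReal_im, Complex.I_im, zero_add,
        Complex.add_re, Complex.I_re, add_zero] at him
      rw [Set.uIcc_of_le (zero_le_one)] at him
      exact (hGcont z him.1 him.2).continuousWithinAt
    · -- differentiability off the singleton
      intro z hz
      obtain ⟨hzmem, hzne⟩ := hz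
      have hzne' : z ≠ Complex.I/2 := by simpa using hzne
      rw [Complex.mem_reProdIm] at hzmem
      have him := hzmem.2
      simp only [Complex.ofReal_im, Complex.add_im, Complex.I_im, zero_add, min_self,
        Complex.ofReal_re, Complex.add_re, Complex.I_re, add_zero] at him
      rw [show min (0:ℝ) 1 = 0 by norm_num, show max (0:ℝ) 1 = 1 by norm_num] at him
      have hcosh : Complex.cosh ((π:ℂ)*z) ≠ 0 :=
        cosh_pi_ne_zero_of_im z him.1.le him.2.le hzne'
      have hw : z - Complex.I/2 ≠ 0 := sub_ne_zero.mpr hzne'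
      have hs : Complex.sinh ((π:ℂ)*(z - Complex.I/2)) ≠ 0 := by
        rw [sinh_shift]
        exact mul_ne_zero (neg_ne_zero.mpr Complex.I_ne_zero) hcosh
      refine ((pp_differentiable n x) z).mul ?_
      refine DifferentiableAt.comp (f := fun w : ℂ => w - Complex.I/2) z
        (psi_hasDeriv_at_ne hw hs) ((differentiable_id.sub_const _) z)
    -- simplify the rectangle identity
    simp only [Complex.neg_re, Complex.neg_im, Complex.ofReal_re, Complex.ofReal_im,
      Complex.add_re, Complex.add_im, Complex.I_re, Complex.I_im, add_zero, zero_add,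
      neg_zero, Complex.ofReal_zero, zero_mul, Complex.ofReal_one, one_mul,
      Complex.ofReal_neg] at hrect0
    -- hrect0 : (∫ u in -R..R, G u) - (∫ u in -R..R, G (u + I)) + I•V_R - I•V_{-R} = 0
    have hBc : Continuous (fun u : ℝ => (((x:ℂ) + 1/2 + Complex.I*(u:ℂ))^n - (x:ℂ)^n) * sechC u) := by
      apply Continuous.mul _ hsc
      exact ((continuous_const.add (continuous_const.mul Complex.continuous_ofReal)).pow n).sub
        continuous_const
    have hTc : Continuous (fun u : ℝ => (((x:ℂ) - 1/2 + Complex.I*(u:ℂ))^n - (x:ℂ)^n) * sechC u) := by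
      apply Continuous.mul _ hsc
      exact ((continuous_const.add (continuous_const.mul Complex.continuous_ofReal)).pow n).sub
        continuous_const
    have hsplit : (∫ u in (-R)..R, G ((u:ℂ))) - (∫ u in (-R)..R, G ((u:ℂ) + Complex.I))
        = ∫ u in (-R)..R, Φ u := by
      simp only [hbot, htop]
      rw [intervalIntegral.integral_neg, sub_neg_eq_add,
        ← intervalIntegral.integral_add (hBc.intervalIntegrable _ _) (hTc.intervalIntegrable _ _)]
      apply intervalIntegral.integral_congr
      intro u _
      rw [hΦ]
      ring
    -- vertical bound
    have hvert : ∀ s : ℝ, |s| = R →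
        ‖∫ y in (0:ℝ)..1, G ((s:ℂ) + (y:ℂ)*Complex.I)‖ ≤ M R := by
      intro s hs
      have hsne : s ≠ 0 := by
        intro h; rw [h] at hs; simp at hs; linarith
      have key : ∀ y ∈ Set.uIoc (0:ℝ) (1:ℝ), ‖G ((s:ℂ) + (y:ℂ)*Complex.I)‖ ≤ M R := by
        intro y hy
        rw [Set.uIoc_of_le zero_le_one] at hy
        set z : ℂ := (s:ℂ) + (y:ℂ)*Complex.I with hzdef
        have hzre : z.re = s := by simp [hzdef]
        have hzim : z.im = y := by simp [hzdef]
        have hcosh : Complex.cosh ((π:ℂ)*z) ≠ 0 :=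
          cosh_pi_ne_zero_of_re z (by rw [hzre]; exact hsne)
        rw [hG]
        simp only []
        rw [G_eq n x z hcosh, norm_div]
        have hnum : ‖((x:ℂ) + 1/2 + Complex.I*z)^n - (x:ℂ)^n‖ ≤ (|x|+3/2+R)^n + |x|^n := by
          have hznorm : ‖z‖ ≤ R + 1 := by
            calc ‖z‖ ≤ ‖(s:ℂ)‖ + ‖(y:ℂ)*Complex.I‖ := norm_add_le _ _
              _ = |s| + |y| := by
                  simp [norm_mul, Complex.norm_real, Complex.norm_I]
              _ ≤ R + 1 := by
                  rw [hs]
                  have : |y| ≤ 1 := by rw [_root_.abs_of_pos hy.1]; exact hy.2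
                  linarith
          have hbase : ‖(x:ℂ) + 1/2 + Complex.I*z‖ ≤ |x|+3/2+R := by
            calc ‖(x:ℂ) + 1/2 + Complex.I*z‖ ≤ ‖(x:ℂ)‖ + ‖(1/2:ℂ)‖ + ‖Complex.I*z‖ :=
                  norm_add₃_le
              _ = |x| + 1/2 + ‖z‖ := by
                  simp [norm_mul, Complex.norm_real, Complex.norm_I]
              _ ≤ |x|+3/2+R := by linarith
          calc ‖((x:ℂ) + 1/2 + Complex.I*z)^n - (x:ℂ)^n‖
              ≤ ‖((x:ℂ) + 1/2 + Complex.I*z)^n‖ + ‖(x:ℂ)^n‖ := norm_sub_le _ _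
            _ ≤ (|x|+3/2+R)^n + |x|^n := by
                rw [norm_pow, norm_pow, Complex.norm_real, Real.norm_eq_abs]
                exact add_le_add_left (pow_le_pow_left₀ (norm_nonneg _) hbase n) _

        have hden : Real.sinh (π*R) ≤ ‖Complex.cosh ((π:ℂ)*z)‖ := by
          have h1 : |Real.sinh (π*z.re)| ≤ ‖Complex.cosh ((π:ℂ)*z)‖ := by
            rw [decomp_pi_mul z]
            exact abs_cosh_ge (π*z.re) (π*z.im)
          refine le_trans ?_ h1
          rw [hzre, Real.abs_sinh, abs_mul, _root_.abs_of_pos Real.pi_pos, hs]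
        have hdenpos : (0:ℝ) < Real.sinh (π*R) := Real.sinh_pos_iff.mpr (by positivity)
        rw [hM]
        simp only []
        apply div_le_div₀ (by positivity) hnum hdenpos hden
      have := intervalIntegral.norm_integral_le_of_norm_le_const key
      simpa using this
    -- conclude
    have hΦR : ∫ u in (-R)..R, Φ u
        = Complex.I • (∫ y in (0:ℝ)..1, G (-((R:ℝ):ℂ) + (y:ℂ)*Complex.I))
          - Complex.I • (∫ y in (0:ℝ)..1, G (((R:ℝ):ℂ) + (y:ℂ)*Complex.I)) := by
      rw [← hsplit]
      linear_combination hrect0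
    rw [hΦR]
    have b1 := hvert R (by rw [_root_.abs_of_pos hRpos])
    have b2 := hvert (-R) (by rw [abs_neg, _root_.abs_of_pos hRpos])
    rw [Complex.ofReal_neg] at b2
    calc ‖Complex.I • (∫ y in (0:ℝ)..1, G (-((R:ℝ):ℂ) + (y:ℂ)*Complex.I))
          - Complex.I • (∫ y in (0:ℝ)..1, G (((R:ℝ):ℂ) + (y:ℂ)*Complex.I))‖
        ≤ ‖Complex.I • (∫ y in (0:ℝ)..1, G (-((R:ℝ):ℂ) + (y:ℂ)*Complex.I))‖
          + ‖Complex.I • (∫ y in (0:ℝ)..1, G (((R:ℝ):ℂ) + (y:ℂ)*Complex.I))‖ := norm_sub_le _ _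
      _ ≤ M R + M R := by
          rw [norm_smul, norm_smul, Complex.norm_I, one_mul, one_mul]
          exact add_le_add b2 b1
      _ = 2 * M R := by ring
  -- M tends to zero
  have hMlim : Tendsto M atTop (nhds 0) := by
    have hbound : ∀ᶠ R : ℝ in atTop, |M R| ≤ 4*((|x|+3/2+R)^n * Real.exp (-(π*R)))
        + (4*|x|^n) * Real.exp (-(π*R)) := by
      filter_upwards [eventually_ge_atTop (1:ℝ)] with R hR
      have hRpos : (0:ℝ) < R := lt_of_lt_of_le one_pos hR
      have hsinhpos : (0:ℝ) < Real.sinh (π*R) := Real.sinh_pos_iff.mpr (by positivity)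
      have hMnn : 0 ≤ M R := by
        rw [hM]; simp only []
        apply div_nonneg _ hsinhpos.le
        positivity
      rw [_root_.abs_of_nonneg hMnn]
      have hsinh_ge : Real.exp (π*R) / 4 ≤ Real.sinh (π*R) := by
        rw [Real.sinh_eq]
        have h1 : Real.exp (π*R) ≥ 2 := by
          have : (1:ℝ) ≤ π*R := by nlinarith [Real.pi_gt_three]
          have := Real.add_one_le_exp (π*R)
          linarith
        have h2 : Real.exp (-(π*R)) ≤ 1 := by
          rw [Real.exp_le_one_iff]
          nlinarith [Real.pi_gt_three]
        nlinarith
      have hnumnn : (0:ℝ) ≤ (|x|+3/2+R)^n + |x|^n := by positivity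
      calc M R ≤ ((|x|+3/2+R)^n + |x|^n) / (Real.exp (π*R)/4) := by
            rw [hM]; simp only []
            apply div_le_div₀ hnumnn le_rfl (by positivity) hsinh_ge
        _ = 4*((|x|+3/2+R)^n * Real.exp (-(π*R))) + (4*|x|^n) * Real.exp (-(π*R)) := by
            rw [Real.exp_neg]
            field_simp
    have hlim1 : Tendsto (fun R : ℝ => 4*((|x|+3/2+R)^n * Real.exp (-(π*R)))
        + (4*|x|^n) * Real.exp (-(π*R))) atTop (nhds 0) := by
      have h1 := (tendsto_poly_exp (|x|+3/2) π Real.pi_pos n).const_mul 4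
      have h2 := (tendsto_poly_exp 0 π Real.pi_pos 0).const_mul (4*|x|^n)
      rw [mul_zero] at h1 h2
      have := h1.add h2
      rw [add_zero] at this
      refine this.congr fun R => ?_
      simp
    exact squeeze_zero_norm' (by simpa [Real.norm_eq_abs] using hbound) hlim1
  -- finish
  have h1 : Tendsto (fun R : ℝ => ∫ u in (-R)..R, Φ u) atTop (nhds (∫ u, Φ u)) :=
    intervalIntegral_tendsto_integral hΦint tendsto_neg_atTop_atBot tendsto_id
  have h2 : Tendsto (fun R : ℝ => ∫ u in (-R)..R, Φ u) atTop (nhds 0) := by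
    apply squeeze_zero_norm' _ (by simpa using hMlim.const_mul (2:ℝ))
    filter_upwards [eventually_ge_atTop (1:ℝ)] with R hR
    exact hrect R hR
  exact tendsto_nhds_unique h1 h2

/-- Cancellation lemma, Euler case:
`(1/2) ∫_ℝ [(x - 1/2 + i u)^n + (x + 1/2 + i u)^n] sech(π u) du = xⁿ`. -/
theorem statement_5 (n : ℕ) (x : ℝ) :
    Integrable (fun u : ℝ =>
      (((x : ℂ) - 1 / 2 + Complex.I * (u : ℂ)) ^ n +
        ((x : ℂ) + 1 / 2 + Complex.I * (u : ℂ)) ^ n) *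
        ((1 / Real.cosh (π * u) : ℝ) : ℂ)) ∧
    (1 / 2 : ℂ) * ∫ u : ℝ,
        (((x : ℂ) - 1 / 2 + Complex.I * (u : ℂ)) ^ n +
          ((x : ℂ) + 1 / 2 + Complex.I * (u : ℂ)) ^ n) *
          ((1 / Real.cosh (π * u) : ℝ) : ℂ) = (x : ℂ) ^ n := by
  have e1 : ∀ u : ℝ, ‖((x:ℂ) - 1/2 + Complex.I*(u:ℂ))‖ ≤ |x|+3/2+|u| := by
    intro u
    calc ‖((x:ℂ) - 1/2 + Complex.I*(u:ℂ))‖ ≤ ‖(x:ℂ) - 1/2‖ + ‖Complex.I*(u:ℂ)‖ :=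
          norm_add_le _ _
      _ ≤ (‖(x:ℂ)‖ + ‖(1/2 : ℂ)‖) + ‖Complex.I‖*‖(u:ℂ)‖ := by
          rw [norm_mul]; exact add_le_add_left (norm_sub_le _ _) _
      _ ≤ |x|+3/2+|u| := by
          simp [Complex.norm_real, Complex.norm_I]
          norm_num
  have e2 : ∀ u : ℝ, ‖((x:ℂ) + 1/2 + Complex.I*(u:ℂ))‖ ≤ |x|+3/2+|u| := by
    intro u
    calc ‖((x:ℂ) + 1/2 + Complex.I*(u:ℂ))‖ ≤ ‖(x:ℂ) + 1/2‖ + ‖Complex.I*(u:ℂ)‖ :=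
          norm_add_le _ _
      _ ≤ (‖(x:ℂ)‖ + ‖(1/2 : ℂ)‖) + ‖Complex.I‖*‖(u:ℂ)‖ := by
          rw [norm_mul]; exact add_le_add_left (norm_add_le _ _) _
      _ ≤ |x|+3/2+|u| := by
          simp [Complex.norm_real, Complex.norm_I]
          norm_num
  have hΨint : Integrable (fun u : ℝ =>
      (((x : ℂ) - 1 / 2 + Complex.I * (u : ℂ)) ^ n +
        ((x : ℂ) + 1 / 2 + Complex.I * (u : ℂ)) ^ n) *
        ((1 / Real.cosh (π * u) : ℝ) : ℂ)) := by
    apply integrable_mul_sech _ ?_ (|x|+3/2) 2 n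
    · intro u
      calc ‖((x:ℂ) - 1/2 + Complex.I*(u:ℂ))^n + ((x:ℂ) + 1/2 + Complex.I*(u:ℂ))^n‖
          ≤ ‖((x:ℂ) - 1/2 + Complex.I*(u:ℂ))^n‖ + ‖((x:ℂ) + 1/2 + Complex.I*(u:ℂ))^n‖ :=
            norm_add_le _ _
        _ ≤ (|x|+3/2+|u|)^n + (|x|+3/2+|u|)^n := by
            rw [norm_pow, norm_pow]
            exact add_le_add (pow_le_pow_left₀ (norm_nonneg _) (e1 u) n)
              (pow_le_pow_left₀ (norm_nonneg _) (e2 u) n)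
        _ = 2 * (|x|+3/2+|u|)^n := by ring
    · apply Continuous.add
      · exact ((continuous_const.add (continuous_const.mul Complex.continuous_ofReal)).pow n)
      · exact ((continuous_const.add (continuous_const.mul Complex.continuous_ofReal)).pow n)
  refine ⟨hΨint, ?_⟩
  have hsechR : Integrable (fun u : ℝ => 1/Real.cosh (π*u)) := by
    simpa using integrable_aux 0 0
  have hsechInt : Integrable (fun u : ℝ => ((1/Real.cosh (π*u) : ℝ):ℂ)) := hsechR.ofReal
  have hΦint : Integrable (fun u : ℝ =>
      (((x:ℂ) - 1/2 + Complex.I*(u:ℂ))^n + ((x:ℂ) + 1/2 + Complex.I*(u:ℂ))^n - 2*(x:ℂ)^n)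
        * ((1/Real.cosh (π*u) : ℝ):ℂ)) := by
    have := hΨint.sub (hsechInt.const_mul (2*(x:ℂ)^n))
    refine this.congr (Filter.Eventually.of_forall fun u => ?_)
    simp only [Pi.sub_apply]
    ring
  have hchange : (∫ u : ℝ,
        (((x : ℂ) - 1 / 2 + Complex.I * (u : ℂ)) ^ n +
          ((x : ℂ) + 1 / 2 + Complex.I * (u : ℂ)) ^ n) *
          ((1 / Real.cosh (π * u) : ℝ) : ℂ))
      = (∫ u : ℝ,
        ((((x:ℂ) - 1/2 + Complex.I*(u:ℂ))^n + ((x:ℂ) + 1/2 + Complex.I*(u:ℂ))^n - 2*(x:ℂ)^n)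
          * ((1/Real.cosh (π*u) : ℝ):ℂ)
        + (2*(x:ℂ)^n) * ((1/Real.cosh (π*u) : ℝ):ℂ))) := by
    congr 1
    funext u
    ring
  have hos : ∫ u : ℝ, ((1/Real.cosh (π*u) : ℝ):ℂ) = ((∫ u : ℝ, 1/Real.cosh (π*u) : ℝ) : ℂ) :=
    integral_ofReal
  rw [hchange, integral_add hΦint (hsechInt.const_mul _), key_zero n x, zero_add,
    MeasureTheory.integral_const_mul, hos, integral_sech]
  push_cast
  ring
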